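/- There exists a non-uniform consistent random ordering on the class of all finite connected bipartite simple graphs: a consistent random ordering (μ_G)_G on this class such that for some finite connected bipartite graph G, μ_G is not the uniform probability measure on linear orderings of V(G). -/

import Mathlib

open Finset

/-- The linear orderings of a finite set `V ⊆ ℕ`, represented as the lists
enumerating the elements of `V` exactly once. -/
def Orderings (V : Finset ℕ) : Finset (List ℕ) :=
  (V.sort (· ≤ ·)).permutations.toFinset

/-- An `r`-uniform hypergraph on a finite vertex set `V ⊆ ℕ`: a set of
`r`-element subsets of `V`.  For `r = 2` this is exactly a finite simple graph. -/
structure FinHypergraph (r : ℕ) where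
  verts : Finset ℕ
  edges : Finset (Finset ℕ)
  card_edge : ∀ e ∈ edges, e.card = r
  edge_subset : ∀ e ∈ edges, e ⊆ verts

namespace FinHypergraph

/-- `H` is an induced subhypergraph of `G`. -/
def IsInduced {r : ℕ} (H G : FinHypergraph r) : Prop :=
  H.verts ⊆ G.verts ∧ ∀ e : Finset ℕ, e ⊆ H.verts → (e ∈ H.edges ↔ e ∈ G.edges)

/-- `φ` is an isomorphism from `G` onto `G'`. -/
def IsIso {r : ℕ} (G G' : FinHypergraph r) (φ : ℕ → ℕ) : Prop :=
  Set.InjOn φ G.verts ∧ G.verts.image φ = G'.verts ∧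
    ∀ e : Finset ℕ, e ⊆ G.verts → (e ∈ G.edges ↔ e.image φ ∈ G'.edges)

end FinHypergraph

/-- A consistent random ordering on a class `𝒞` of `r`-uniform hypergraphs:
an isomorphism-invariant assignment, to each hypergraph `G` in the class, of a
probability measure `μ G` on the linear orderings of its vertex set, compatible
with restriction to induced subhypergraphs. -/
structure ConsistentRandomOrdering {r : ℕ} (𝒞 : Set (FinHypergraph r)) where
  μ : FinHypergraph r → List ℕ → ℝ
  nonneg : ∀ G l, 0 ≤ μ G l
  supported : ∀ G ∈ 𝒞, ∀ l : List ℕ, l ∉ Orderings G.verts → μ G l = 0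
  total : ∀ G ∈ 𝒞, ∑ l ∈ Orderings G.verts, μ G l = 1
  iso_invariant : ∀ G ∈ 𝒞, ∀ G' ∈ 𝒞, ∀ φ : ℕ → ℕ, G.IsIso G' φ →
    ∀ l ∈ Orderings G.verts, μ G' (l.map φ) = μ G l
  restriction : ∀ G ∈ 𝒞, ∀ H ∈ 𝒞, H.IsInduced G → ∀ m ∈ Orderings H.verts,
    μ H m = ∑ l ∈ (Orderings G.verts).filter
      (fun l => l.filter (fun x => decide (x ∈ H.verts)) = m), μ G l

/-- Adjacency in a graph (`2`-uniform hypergraph). -/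
def FinHypergraph.Adj (G : FinHypergraph 2) (x y : ℕ) : Prop :=
  ({x, y} : Finset ℕ) ∈ G.edges

/-- `G` is connected: every pair of distinct vertices is joined by a path. -/
def FinHypergraph.Connected (G : FinHypergraph 2) : Prop :=
  ∀ x ∈ G.verts, ∀ y ∈ G.verts, x ≠ y →
    ∃ p : List ℕ, List.Chain G.Adj x p ∧ (x :: p).getLast (List.cons_ne_nil x p) = y

/-- `G` is bipartite: its vertex set splits into two parts such that every edge
joins the two parts. -/
def FinHypergraph.Bipartite (G : FinHypergraph 2) : Prop :=
  ∃ A B : Finset ℕ, A ∪ B = G.verts ∧ Disjoint A B ∧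
    ∀ e ∈ G.edges, ∃ a ∈ A, ∃ b ∈ B, e = ({a, b} : Finset ℕ)


lemma mem_orderings {V : Finset ℕ} {l : List ℕ} :
    l ∈ Orderings V ↔ l.Nodup ∧ l.toFinset = V := by
  simp only [Orderings, List.mem_toFinset, List.mem_permutations]
  constructor
  · intro h
    refine ⟨h.symm.nodup (Finset.sort_nodup _ _), ?_⟩
    rw [List.toFinset_eq_of_perm _ _ h, Finset.sort_toFinset]
  · rintro ⟨h1, h2⟩
    rw [List.perm_ext_iff_of_nodup h1 (Finset.sort_nodup _ _)]
    intro a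
    rw [← List.mem_toFinset, h2, ← Finset.mem_sort (α := ℕ) (· ≤ ·)]

lemma orderings_length {V : Finset ℕ} {l : List ℕ} (h : l ∈ Orderings V) :
    l.length = V.card := by
  rw [mem_orderings] at h
  rw [← h.2, List.toFinset_card_of_nodup h.1]

lemma card_orderings (V : Finset ℕ) : (Orderings V).card = V.card.factorial := by
  rw [Orderings, List.toFinset_card_of_nodup (List.nodup_permutations _ (Finset.sort_nodup _ _)),
    List.length_permutations, Finset.length_sort]

-- filter of erase when p x = false
lemma filter_erase_of_neg {p : ℕ → Bool} {x : ℕ} (hx : p x = false) :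
    ∀ l : List ℕ, (l.erase x).filter p = l.filter p := by
  intro l
  induction l with
  | nil => rfl
  | cons a l ih =>
    by_cases hax : a = x
    · subst hax
      rw [List.erase_cons_head, List.filter_cons, hx]
      simp
    · rw [List.erase_cons_tail (by simp [Ne.symm, hax] : ¬(a == x) = true)]
      rw [List.filter_cons, List.filter_cons, ih]

lemma filter_insertIdx_of_neg {p : ℕ → Bool} {x : ℕ} (hx : p x = false) :
    ∀ (i : ℕ) (l : List ℕ), i ≤ l.length → (l.insertIdx i x).filter p = l.filter p := by
  intro i
  induction i with
  | zero => intro l _; rw [List.insertIdx_zero, List.filter_cons, hx]; simp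
  | succ n ih =>
    intro l hl
    cases l with
    | nil => simp at hl
    | cons a l =>
      rw [List.insertIdx_succ_cons, List.filter_cons, List.filter_cons,
        ih l (by simpa using hl)]

lemma insertIdx_indexOf_erase {x : ℕ} :
    ∀ {l : List ℕ}, x ∈ l → l.Nodup → (l.erase x).insertIdx (l.idxOf x) x = l := by
  intro l
  induction l with
  | nil => intro h; simp at h
  | cons a l ih =>
    intro hx hnd
    by_cases hax : a = x
    · subst hax
      rw [List.erase_cons_head, List.idxOf_cons_self, List.insertIdx_zero]
    · rw [List.erase_cons_tail (by simp [Ne.symm, hax] : ¬(a == x) = true),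
        List.idxOf_cons_ne _ (by simpa using hax), List.insertIdx_succ_cons,
        ih (by rcases List.mem_cons.1 hx with h|h; exact absurd h.symm hax; exact h) hnd.of_cons]

lemma indexOf_insertIdx_self {x : ℕ} :
    ∀ (i : ℕ) (l : List ℕ), x ∉ l → i ≤ l.length → (l.insertIdx i x).idxOf x = i := by
  intro i
  induction i with
  | zero => intro l _ _; rw [List.insertIdx_zero, List.idxOf_cons_self]
  | succ n ih =>
    intro l hx hl
    cases l with
    | nil => simp at hl
    | cons a l =>
      rw [List.insertIdx_succ_cons,
        List.idxOf_cons_ne _ (by rintro rfl; exact hx List.mem_cons_self),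
        ih l (fun h => hx (List.mem_cons_of_mem _ h)) (by simpa using hl)]

lemma erase_insertIdx_self {x : ℕ} :
    ∀ (i : ℕ) (l : List ℕ), x ∉ l → i ≤ l.length → (l.insertIdx i x).erase x = l := by
  intro i
  induction i with
  | zero => intro l _ _; rw [List.insertIdx_zero, List.erase_cons_head]
  | succ n ih =>
    intro l hx hl
    cases l with
    | nil => simp at hl
    | cons a l =>
      rw [List.insertIdx_succ_cons,
        List.erase_cons_tail (by simp; rintro rfl; exact hx List.mem_cons_self),
        ih l (fun h => hx (List.mem_cons_of_mem _ h)) (by simpa using hl)]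

lemma toFinset_erase_of_nodup {x : ℕ} {l : List ℕ} (h : l.Nodup) :
    (l.erase x).toFinset = l.toFinset.erase x := by
  ext y
  simp [h.mem_erase_iff, Finset.mem_erase, and_comm]
lemma count_filter_mul (T : Finset ℕ) (t : List ℕ) (ht : t ∈ Orderings T) :
    ∀ (k : ℕ) (S : Finset ℕ), T ⊆ S → (S \ T).card = k →
    ((Orderings S).filter (fun l => l.filter (fun x => decide (x ∈ T)) = t)).card
      * T.card.factorial = S.card.factorial := by
  intro k
  induction k with
  | zero =>
    intro S hT hk
    have hST : S = T := by
      rw [Finset.card_eq_zero, Finset.sdiff_eq_empty_iff_subset] at hk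
      exact le_antisymm hk hT
    subst hST
    have : (Orderings S).filter (fun l => l.filter (fun x => decide (x ∈ S)) = t) = {t} := by
      ext l
      simp only [Finset.mem_filter, Finset.mem_singleton]
      constructor
      · rintro ⟨hl, hf⟩
        rwa [List.filter_eq_self.mpr (fun a ha => by
          simp [← (mem_orderings.1 hl).2, List.mem_toFinset.2 ha])] at hf
      · rintro rfl
        exact ⟨ht, List.filter_eq_self.mpr (fun a ha => by
          simp [← (mem_orderings.1 ht).2, List.mem_toFinset.2 ha])⟩
    rw [this, Finset.card_singleton, one_mul]
  | succ k ih =>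
    intro S hT hk
    obtain ⟨x, hx⟩ : (S \ T).Nonempty := by
      rw [← Finset.card_pos, hk]; exact Nat.succ_pos k
    have hxS : x ∈ S := (Finset.mem_sdiff.1 hx).1
    have hxT : x ∉ T := (Finset.mem_sdiff.1 hx).2
    have hT' : T ⊆ S.erase x := fun y hy =>
      Finset.mem_erase.2 ⟨fun h => hxT (h ▸ hy), hT hy⟩
    have hk' : ((S.erase x) \ T).card = k := by
      rw [Finset.erase_sdiff_comm, Finset.card_erase_of_mem hx, hk]
      omega
    have hdec : decide (x ∈ T) = false := by simp [hxT]
    have key : ((Orderings S).filter (fun l => l.filter (fun x => decide (x ∈ T)) = t)).card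
        = ((Finset.range S.card) ×ˢ ((Orderings (S.erase x)).filter
            (fun l => l.filter (fun x => decide (x ∈ T)) = t))).card := by
      apply Finset.card_bij' (fun l _ => (l.idxOf x, l.erase x))
        (fun p _ => p.2.insertIdx p.1 x) ?hi ?hj ?left ?right
      case hi =>
        intro l hl
        simp only [Finset.mem_filter] at hl
        obtain ⟨hlo, hlf⟩ := hl
        obtain ⟨hnd, htf⟩ := mem_orderings.1 hlo
        have hxl : x ∈ l := List.mem_toFinset.1 (htf ▸ hxS)
        simp only [Finset.mem_product, Finset.mem_range, Finset.mem_filter]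
        refine ⟨?_, mem_orderings.2 ⟨hnd.erase _, by rw [toFinset_erase_of_nodup hnd, htf]⟩, ?_⟩
        · rw [← orderings_length hlo]
          exact List.idxOf_lt_length_iff.2 hxl
        · rw [filter_erase_of_neg hdec, hlf]
      case hj =>
        rintro ⟨i, l'⟩ hp
        simp only [Finset.mem_product, Finset.mem_range, Finset.mem_filter] at hp
        obtain ⟨hi, hlo', hlf'⟩ := hp
        obtain ⟨hnd', htf'⟩ := mem_orderings.1 hlo'
        have hxl' : x ∉ l' := fun h => (Finset.mem_erase.1 (htf' ▸ List.mem_toFinset.2 h)).1 rfl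
        have hlen : i ≤ l'.length := by
          rw [orderings_length hlo', Finset.card_erase_of_mem hxS]
          omega
        have hperm := List.perm_insertIdx x l' hlen
        simp only [Finset.mem_filter]
        refine ⟨mem_orderings.2 ⟨hperm.symm.nodup (by simp [hxl', hnd']), ?_⟩, ?_⟩
        · rw [List.toFinset_eq_of_perm _ _ hperm, List.toFinset_cons, htf',
            Finset.insert_erase hxS]
        · rw [filter_insertIdx_of_neg hdec _ _ hlen, hlf']
      case left =>
        intro l hl
        simp only [Finset.mem_filter] at hl
        obtain ⟨hnd, htf⟩ := mem_orderings.1 hl.1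
        exact insertIdx_indexOf_erase (List.mem_toFinset.1 (htf ▸ hxS)) hnd
      case right =>
        rintro ⟨i, l'⟩ hp
        simp only [Finset.mem_product, Finset.mem_range, Finset.mem_filter] at hp
        obtain ⟨hi, hlo', _⟩ := hp
        obtain ⟨hnd', htf'⟩ := mem_orderings.1 hlo'
        have hxl' : x ∉ l' := fun h => (Finset.mem_erase.1 (htf' ▸ List.mem_toFinset.2 h)).1 rfl
        have hlen : i ≤ l'.length := by
          rw [orderings_length hlo', Finset.card_erase_of_mem hxS]
          omega
        simp only [Prod.mk.injEq]
        exact ⟨indexOf_insertIdx_self i l' hxl' hlen, erase_insertIdx_self i l' hxl' hlen⟩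
    rw [key, Finset.card_product, Finset.card_range, mul_assoc,
      ih (S.erase x) hT' hk', Finset.card_erase_of_mem hxS]
    have hpos : 1 ≤ S.card := Finset.card_pos.2 ⟨x, hxS⟩
    rw [← Nat.succ_pred_eq_of_pos hpos, Nat.factorial_succ, Nat.succ_pred_eq_of_pos hpos,
      Nat.pred_eq_sub_one, Nat.sub_add_cancel hpos]
lemma block_take_drop {A B : Finset ℕ} (hd : Disjoint A B) {l : List ℕ}
    (hl : l ∈ Orderings (A ∪ B)) (ht : (l.take A.card).toFinset = A) :
    l.take A.card ∈ Orderings A ∧ l.drop A.card ∈ Orderings B := by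
  obtain ⟨hnd, htf⟩ := mem_orderings.1 hl
  have hsplit := List.take_append_drop A.card l
  have hnd2 : (l.take A.card ++ l.drop A.card).Nodup := by rw [hsplit]; exact hnd
  rw [List.nodup_append] at hnd2
  obtain ⟨hnda, hndb, hdisj⟩ := hnd2
  refine ⟨mem_orderings.2 ⟨hnda, ht⟩, mem_orderings.2 ⟨hndb, ?_⟩⟩
  ext x
  simp only [List.mem_toFinset]
  constructor
  · intro hx
    have hxl : x ∈ l := by rw [← hsplit]; exact List.mem_append_right _ hx
    have : x ∈ A ∪ B := by rw [← htf]; exact List.mem_toFinset.2 hxl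
    rcases Finset.mem_union.1 this with h | h
    · exact absurd rfl (hdisj x (by rw [← List.mem_toFinset, ht]; exact h) x hx)
    · exact h
  · intro hx
    have hxl : x ∈ l := by
      rw [← List.mem_toFinset, htf]; exact Finset.mem_union_right _ hx
    rw [← hsplit] at hxl
    rcases List.mem_append.1 hxl with h | h
    · exact absurd hx (Finset.disjoint_left.1 hd (by rw [← ht]; exact List.mem_toFinset.2 h))
    · exact h

lemma card_block_filter (A B : Finset ℕ) (hd : Disjoint A B)
    (p pa pb : List ℕ → Prop) [DecidablePred p] [DecidablePred pa] [DecidablePred pb]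
    (hsplit : ∀ a b, a ∈ Orderings A → b ∈ Orderings B → (p (a ++ b) ↔ pa a ∧ pb b)) :
    ((Orderings (A ∪ B)).filter (fun l => (l.take A.card).toFinset = A ∧ p l)).card
      = ((Orderings A).filter pa).card * ((Orderings B).filter pb).card := by
  rw [← Finset.card_product]
  apply Finset.card_bij' (fun l _ => (l.take A.card, l.drop A.card))
    (fun q _ => q.1 ++ q.2) ?hi ?hj ?left ?right
  case hi =>
    intro l hl
    simp only [Finset.mem_filter] at hl
    obtain ⟨hlo, ht, hp⟩ := hl
    obtain ⟨hta, htb⟩ := block_take_drop hd hlo ht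
    simp only [Finset.mem_product, Finset.mem_filter]
    have := (hsplit _ _ hta htb).1 (by rwa [List.take_append_drop])
    exact ⟨⟨hta, this.1⟩, htb, this.2⟩
  case hj =>
    rintro ⟨a, b⟩ hq
    simp only [Finset.mem_product, Finset.mem_filter] at hq
    obtain ⟨⟨hao, hpa⟩, hbo, hpb⟩ := hq
    obtain ⟨hnda, htfa⟩ := mem_orderings.1 hao
    obtain ⟨hndb, htfb⟩ := mem_orderings.1 hbo
    have hlen : a.length = A.card := orderings_length hao
    have htake : (a ++ b).take A.card = a := by
      rw [← hlen, List.take_left]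
    simp only [Finset.mem_filter]
    refine ⟨mem_orderings.2 ⟨?_, ?_⟩, ?_, (hsplit _ _ hao hbo).2 ⟨hpa, hpb⟩⟩
    · rw [List.nodup_append]
      exact ⟨hnda, hndb, fun x hxa y hyb hxy => Finset.disjoint_left.1 hd
        (htfa ▸ List.mem_toFinset.2 hxa) (htfb ▸ List.mem_toFinset.2 (hxy ▸ hyb))⟩
    · rw [List.toFinset_append, htfa, htfb]
    · rw [htake, htfa]
  case left =>
    intro l _
    exact List.take_append_drop _ _
  case right =>
    rintro ⟨a, b⟩ hq
    simp only [Finset.mem_product, Finset.mem_filter] at hq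
    have hlen : a.length = A.card := orderings_length hq.1.1
    simp only [Prod.mk.injEq]
    rw [← hlen, List.take_left, List.drop_left]
    exact ⟨rfl, rfl⟩
/-- weight of an ordering under "block `A` first, then block `B`, uniform within". -/
noncomputable def uOrd (A B : Finset ℕ) (l : List ℕ) : ℝ :=
  if l ∈ Orderings (A ∪ B) ∧ (l.take A.card).toFinset = A
  then ((A.card.factorial * B.card.factorial : ℕ) : ℝ)⁻¹ else 0

lemma uOrd_nonneg (A B : Finset ℕ) (l : List ℕ) : 0 ≤ uOrd A B l := by
  unfold uOrd; split
  · positivity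
  · exact le_rfl

lemma uOrd_zero {A B : Finset ℕ} {l : List ℕ} (h : l ∉ Orderings (A ∪ B)) :
    uOrd A B l = 0 := by
  unfold uOrd
  rw [if_neg (fun hc => h hc.1)]

lemma card_block (A B : Finset ℕ) (hd : Disjoint A B) :
    ((Orderings (A ∪ B)).filter (fun l => (l.take A.card).toFinset = A)).card
      = A.card.factorial * B.card.factorial := by
  have h := card_block_filter A B hd (fun _ => True) (fun _ => True) (fun _ => True)
    (fun _ _ _ _ => by simp)
  simp only [and_true, Finset.filter_true] at h
  rw [h, card_orderings, card_orderings]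

lemma sum_uOrd_total (A B : Finset ℕ) (hd : Disjoint A B) :
    ∑ l ∈ Orderings (A ∪ B), uOrd A B l = 1 := by
  have hc : ∀ l ∈ Orderings (A ∪ B), uOrd A B l =
      if (l.take A.card).toFinset = A
      then ((A.card.factorial * B.card.factorial : ℕ) : ℝ)⁻¹ else 0 := by
    intro l hl
    unfold uOrd
    by_cases h : (l.take A.card).toFinset = A <;> simp [hl, h]
  rw [Finset.sum_congr rfl hc, ← Finset.sum_filter, Finset.sum_const, card_block A B hd,
    nsmul_eq_mul, mul_inv_cancel₀]
  exact_mod_cast Nat.mul_ne_zero (Nat.factorial_ne_zero _) (Nat.factorial_ne_zero _)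

lemma filter_orderings_info {A A' : Finset ℕ} (hA' : A' ⊆ A) {a : List ℕ}
    (ha : a ∈ Orderings A) :
    (a.filter (fun x => decide (x ∈ A'))).Nodup ∧
    (a.filter (fun x => decide (x ∈ A'))).toFinset = A' ∧
    (a.filter (fun x => decide (x ∈ A'))).length = A'.card := by
  obtain ⟨hnd, htf⟩ := mem_orderings.1 ha
  have h1 : (a.filter (fun x => decide (x ∈ A'))).Nodup := hnd.filter _
  have h2 : (a.filter (fun x => decide (x ∈ A'))).toFinset = A' := by
    ext x
    simp only [List.mem_toFinset, List.mem_filter, decide_eq_true_eq]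
    constructor
    · exact fun h => h.2
    · intro h
      exact ⟨by rw [← List.mem_toFinset, htf]; exact hA' h, h⟩
  exact ⟨h1, h2, by rw [← List.toFinset_card_of_nodup h1, h2]⟩

lemma sum_uOrd_restrict (A B W : Finset ℕ) (hd : Disjoint A B) (hW : W ⊆ A ∪ B)
    (m : List ℕ) (hm : m ∈ Orderings W) :
    ∑ l ∈ (Orderings (A ∪ B)).filter
        (fun l => l.filter (fun x => decide (x ∈ W)) = m), uOrd A B l
      = uOrd (A ∩ W) (B ∩ W) m := by
  have hun : (A ∩ W) ∪ (B ∩ W) = W := by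
    rw [← Finset.union_inter_distrib_right, Finset.inter_eq_right.2 hW]
  have hd' : Disjoint (A ∩ W) (B ∩ W) :=
    (hd.mono (Finset.inter_subset_left) (Finset.inter_subset_left))
  -- the split property
  have hsplit : ∀ a b, a ∈ Orderings A → b ∈ Orderings B →
      (((a ++ b).filter (fun x => decide (x ∈ W)) = m) ↔
        (a.filter (fun x => decide (x ∈ A ∩ W)) = m.take (A ∩ W).card ∧
         b.filter (fun x => decide (x ∈ B ∩ W)) = m.drop (A ∩ W).card)) := by
    intro a b ha hb
    have hca : a.filter (fun x => decide (x ∈ W)) = a.filter (fun x => decide (x ∈ A ∩ W)) := by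
      apply List.filter_congr
      intro x hx
      have hxA : x ∈ A := by
        rw [← List.mem_toFinset, (mem_orderings.1 ha).2] at hx; exact hx
      simp [Finset.mem_inter, hxA]
    have hcb : b.filter (fun x => decide (x ∈ W)) = b.filter (fun x => decide (x ∈ B ∩ W)) := by
      apply List.filter_congr
      intro x hx
      have hxB : x ∈ B := by
        rw [← List.mem_toFinset, (mem_orderings.1 hb).2] at hx; exact hx
      simp [Finset.mem_inter, hxB]
    obtain ⟨hnda', _, hlena⟩ := filter_orderings_info (Finset.inter_subset_left) ha
    rw [List.filter_append, hca, hcb]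
    constructor
    · intro h
      constructor
      · rw [← h, ← hlena, List.take_left]
      · rw [← h, ← hlena, List.drop_left]
    · rintro ⟨h1, h2⟩
      rw [h1, h2, List.take_append_drop]
  -- rewrite the sum as cardinality times constant
  have hc : ∀ l ∈ (Orderings (A ∪ B)).filter
      (fun l => l.filter (fun x => decide (x ∈ W)) = m), uOrd A B l =
      if (l.take A.card).toFinset = A
      then ((A.card.factorial * B.card.factorial : ℕ) : ℝ)⁻¹ else 0 := by
    intro l hl
    have := (Finset.mem_filter.1 hl).1
    unfold uOrd
    by_cases h : (l.take A.card).toFinset = A <;> simp [this, h]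
  rw [Finset.sum_congr rfl hc, ← Finset.sum_filter, Finset.filter_filter, Finset.sum_const,
    nsmul_eq_mul]
  have hswap : (Orderings (A ∪ B)).filter
      (fun l => l.filter (fun x => decide (x ∈ W)) = m ∧ (l.take A.card).toFinset = A)
      = (Orderings (A ∪ B)).filter
      (fun l => (l.take A.card).toFinset = A ∧ l.filter (fun x => decide (x ∈ W)) = m) := by
    apply Finset.filter_congr
    intro l _
    constructor <;> exact fun h => ⟨h.2, h.1⟩
  rw [hswap, card_block_filter A B hd _ _ _ hsplit]
  by_cases hblock : (m.take (A ∩ W).card).toFinset = A ∩ W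
  · -- main case
    obtain ⟨hma, hmb⟩ := block_take_drop hd' (by rwa [hun]) hblock
    have h1 := count_filter_mul (A ∩ W) (m.take (A ∩ W).card) hma
      (A \ (A ∩ W)).card A (Finset.inter_subset_left) rfl
    have h2 := count_filter_mul (B ∩ W) (m.drop (A ∩ W).card) hmb
      (B \ (B ∩ W)).card B (Finset.inter_subset_left) rfl
    set nA := ((Orderings A).filter
      (fun l => l.filter (fun x => decide (x ∈ A ∩ W)) = m.take (A ∩ W).card)).card
    set nB := ((Orderings B).filter
      (fun l => l.filter (fun x => decide (x ∈ B ∩ W)) = m.drop (A ∩ W).card)).card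
    have hnat : (nA * nB) * ((A ∩ W).card.factorial * (B ∩ W).card.factorial)
        = A.card.factorial * B.card.factorial := by
      calc (nA * nB) * ((A ∩ W).card.factorial * (B ∩ W).card.factorial)
          = (nA * (A ∩ W).card.factorial) * (nB * (B ∩ W).card.factorial) := by ring
        _ = A.card.factorial * B.card.factorial := by rw [h1, h2]
    have hRHS : uOrd (A ∩ W) (B ∩ W) m
        = (((A ∩ W).card.factorial * (B ∩ W).card.factorial : ℕ) : ℝ)⁻¹ := by
      unfold uOrd
      rw [if_pos ⟨by rwa [hun], hblock⟩]
    rw [hRHS]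
    have hne1 : ((A.card.factorial * B.card.factorial : ℕ) : ℝ) ≠ 0 := by
      exact_mod_cast Nat.mul_ne_zero (Nat.factorial_ne_zero _) (Nat.factorial_ne_zero _)
    have hne2 : (((A ∩ W).card.factorial * (B ∩ W).card.factorial : ℕ) : ℝ) ≠ 0 := by
      exact_mod_cast Nat.mul_ne_zero (Nat.factorial_ne_zero _) (Nat.factorial_ne_zero _)
    have hreal : ((nA * nB : ℕ) : ℝ) * (((A ∩ W).card.factorial * (B ∩ W).card.factorial : ℕ) : ℝ)
        = ((A.card.factorial * B.card.factorial : ℕ) : ℝ) := by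
      exact_mod_cast congrArg (fun n : ℕ => (n : ℝ)) hnat
    field_simp
    exact_mod_cast hnat
  · -- degenerate case: both sides vanish
    have hFibA : ((Orderings A).filter
        (fun l => l.filter (fun x => decide (x ∈ A ∩ W)) = m.take (A ∩ W).card)) = ∅ := by
      rw [Finset.filter_eq_empty_iff]
      intro a ha h
      obtain ⟨_, htf, _⟩ := filter_orderings_info (Finset.inter_subset_left) ha
      exact hblock (by rw [← h, htf])
    rw [hFibA]
    have hRHS : uOrd (A ∩ W) (B ∩ W) m = 0 := by
      unfold uOrd
      rw [if_neg (fun hc => hblock hc.2)]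
    rw [hRHS]
    simp

def IsBipPair (G : FinHypergraph 2) (A B : Finset ℕ) : Prop :=
  A ∪ B = G.verts ∧ Disjoint A B ∧
    ∀ e ∈ G.edges, ∃ a ∈ A, ∃ b ∈ B, e = ({a, b} : Finset ℕ)

lemma IsBipPair.swap {G : FinHypergraph 2} {A B : Finset ℕ} (h : IsBipPair G A B) :
    IsBipPair G B A := by
  obtain ⟨h1, h2, h3⟩ := h
  refine ⟨by rw [Finset.union_comm]; exact h1, h2.symm, ?_⟩
  intro e he
  obtain ⟨a, ha, b, hb, hab⟩ := h3 e he
  exact ⟨b, hb, a, ha, by rw [hab, Finset.pair_comm]⟩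

lemma adj_ne {G : FinHypergraph 2} {x y : ℕ} (h : G.Adj x y) : x ≠ y := by
  intro hxy
  have := G.card_edge _ h
  subst hxy
  simp at this

lemma adj_sides {G : FinHypergraph 2} {A B : Finset ℕ} (h : IsBipPair G A B)
    {x y : ℕ} (hxy : G.Adj x y) : (x ∈ A ∧ y ∈ B) ∨ (x ∈ B ∧ y ∈ A) := by
  obtain ⟨a, ha, b, hb, hab⟩ := h.2.2 _ hxy
  have hne : x ≠ y := adj_ne hxy
  have hx : x ∈ ({a, b} : Finset ℕ) := by rw [← hab]; simp
  have hy : y ∈ ({a, b} : Finset ℕ) := by rw [← hab]; simp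
  simp only [Finset.mem_insert, Finset.mem_singleton] at hx hy
  rcases hx with rfl | rfl <;> rcases hy with rfl | rfl
  · exact absurd rfl hne
  · exact Or.inl ⟨ha, hb⟩
  · exact Or.inr ⟨hb, ha⟩
  · exact absurd rfl hne

lemma bip_unique {G : FinHypergraph 2} {A B A' B' : Finset ℕ}
    (hG : G.Connected) (h1 : IsBipPair G A B) (h2 : IsBipPair G A' B') :
    (A = A' ∧ B = B') ∨ (A = B' ∧ B = A') := by
  have key : ∀ {X Y X' Y' : Finset ℕ}, IsBipPair G X Y → IsBipPair G X' Y' →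
      (∀ v ∈ G.verts, (v ∈ X ↔ v ∈ X')) → X = X' ∧ Y = Y' := by
    intro X Y X' Y' hp hp' hv
    have hXV : X ⊆ G.verts := hp.1 ▸ Finset.subset_union_left
    have hYV : Y ⊆ G.verts := hp.1 ▸ Finset.subset_union_right
    have hXV' : X' ⊆ G.verts := hp'.1 ▸ Finset.subset_union_left
    have hYV' : Y' ⊆ G.verts := hp'.1 ▸ Finset.subset_union_right
    have hXX : X = X' := by
      ext x
      constructor
      · exact fun hx => (hv x (hXV hx)).1 hx
      · exact fun hx => (hv x (hXV' hx)).2 hx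
    refine ⟨hXX, ?_⟩
    ext x
    constructor
    · intro hx
      have hxv : x ∈ G.verts := hYV hx
      have hxX : x ∉ X := Finset.disjoint_right.1 hp.2.1 hx
      have hxX' : x ∉ X' := fun h => hxX ((hv x hxv).2 h)
      rcases Finset.mem_union.1 (hp'.1 ▸ hxv : x ∈ X' ∪ Y') with h | h
      · exact absurd h hxX'
      · exact h
    · intro hx
      have hxv : x ∈ G.verts := hYV' hx
      have hxX' : x ∉ X' := Finset.disjoint_right.1 hp'.2.1 hx
      have hxX : x ∉ X := fun h => hxX' ((hv x hxv).1 h)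
      rcases Finset.mem_union.1 (hp.1 ▸ hxv : x ∈ X ∪ Y) with h | h
      · exact absurd h hxX
      · exact h
  have step : ∀ x y, G.Adj x y → ((x ∈ A ↔ x ∈ A') ↔ (y ∈ A ↔ y ∈ A')) := by
    intro x y hxy
    have d1 : ∀ z, z ∈ A → z ∉ B := fun z hz => Finset.disjoint_left.1 h1.2.1 hz
    have d2 : ∀ z, z ∈ B → z ∉ A := fun z hz => Finset.disjoint_right.1 h1.2.1 hz
    have d3 : ∀ z, z ∈ A' → z ∉ B' := fun z hz => Finset.disjoint_left.1 h2.2.1 hz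
    have d4 : ∀ z, z ∈ B' → z ∉ A' := fun z hz => Finset.disjoint_right.1 h2.2.1 hz
    rcases adj_sides h1 hxy with ⟨hx1, hy1⟩ | ⟨hx1, hy1⟩ <;>
      rcases adj_sides h2 hxy with ⟨hx2, hy2⟩ | ⟨hx2, hy2⟩ <;>
      constructor <;> intro <;>
      first
        | (constructor <;> intro <;>
            first
              | assumption
              | (exfalso; solve_by_elim))
        | (exfalso
           first
             | exact d2 x hx1 ((‹x ∈ A ↔ x ∈ A'›).2 hx2)
             | exact d4 x hx2 ((‹x ∈ A ↔ x ∈ A'›).1 hx1)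
             | exact d2 y hy1 ((‹y ∈ A ↔ y ∈ A'›).2 hy2)
             | exact d4 y hy2 ((‹y ∈ A ↔ y ∈ A'›).1 hy1))
  have chain : ∀ (p : List ℕ) (x : ℕ), List.Chain G.Adj x p →
      ((x ∈ A ↔ x ∈ A') ↔ (((x :: p).getLast (List.cons_ne_nil x p)) ∈ A ↔
        ((x :: p).getLast (List.cons_ne_nil x p)) ∈ A')) := by
    intro p
    induction p with
    | nil => intro x _; simp
    | cons y p ih =>
      intro x hc
      have hc : G.Adj x y ∧ List.Chain G.Adj y p := List.chain_cons.1 hc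
      rw [List.getLast_cons (List.cons_ne_nil y p)]
      exact (step x y hc.1).trans (ih y hc.2)
  have main : ∀ v ∈ G.verts, ∀ w ∈ G.verts, ((v ∈ A ↔ v ∈ A') ↔ (w ∈ A ↔ w ∈ A')) := by
    intro v hv w hw
    by_cases hvw : v = w
    · subst hvw; rfl
    · obtain ⟨p, hcp, hlast⟩ := hG v hv w hw hvw
      have := chain p v hcp
      rw [hlast] at this
      exact this
  by_cases hall : ∀ v ∈ G.verts, (v ∈ A ↔ v ∈ A')
  · exact Or.inl (key h1 h2 hall)
  · push_neg at hall
    obtain ⟨v0, hv0, hP0pre⟩ := hall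
    have hP0 : ¬(v0 ∈ A ↔ v0 ∈ A') := by
      rcases hP0pre with ⟨ha, hb⟩ | ⟨ha, hb⟩
      · exact fun h => hb (h.1 ha)
      · exact fun h => ha (h.2 hb)
    have hswap : ∀ v ∈ G.verts, (v ∈ A ↔ v ∈ B') := by
      intro v hv
      have hnP : ¬(v ∈ A ↔ v ∈ A') := fun h => hP0 ((main v hv v0 hv0).1 h)
      have hv' : v ∈ A' ∪ B' := h2.1 ▸ hv
      constructor
      · intro hvA
        have : v ∉ A' := fun h => hnP (iff_of_true hvA h)
        rcases Finset.mem_union.1 hv' with h | h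
        · exact absurd h this
        · exact h
      · intro hvB'
        have hvA' : v ∉ A' := Finset.disjoint_right.1 h2.2.1 hvB'
        by_contra hvA
        exact hnP (iff_of_false hvA hvA')
    exact Or.inr (key h1 h2.swap hswap)

open Classical in
noncomputable def bip (G : FinHypergraph 2) : Finset ℕ × Finset ℕ :=
  if h : ∃ p : Finset ℕ × Finset ℕ, IsBipPair G p.1 p.2 then h.choose else (∅, ∅)

lemma bip_spec {G : FinHypergraph 2} (h : G.Bipartite) :
    IsBipPair G (bip G).1 (bip G).2 := by
  obtain ⟨A, B, h1, h2, h3⟩ := h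
  have hex : ∃ p : Finset ℕ × Finset ℕ, IsBipPair G p.1 p.2 := ⟨(A, B), h1, h2, h3⟩
  rw [bip, dif_pos hex]
  exact hex.choose_spec

noncomputable def muCRO (G : FinHypergraph 2) (l : List ℕ) : ℝ :=
  (uOrd (bip G).1 (bip G).2 l + uOrd (bip G).2 (bip G).1 l) / 2

lemma muCRO_eq {G : FinHypergraph 2} {X Y : Finset ℕ} (hG : G.Connected)
    (hb : G.Bipartite) (hXY : IsBipPair G X Y) (l : List ℕ) :
    muCRO G l = (uOrd X Y l + uOrd Y X l) / 2 := by
  rcases bip_unique hG (bip_spec hb) hXY with ⟨h1, h2⟩ | ⟨h1, h2⟩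
  · rw [muCRO, h1, h2]
  · rw [muCRO, h1, h2, add_comm]

lemma list_toFinset_map (f : ℕ → ℕ) (l : List ℕ) :
    (l.map f).toFinset = l.toFinset.image f := by
  ext y
  simp [List.mem_toFinset, Finset.mem_image, List.mem_map]

lemma image_cancel {φ : ℕ → ℕ} {V s t : Finset ℕ} (hinj : Set.InjOn φ V)
    (hs : s ⊆ V) (ht : t ⊆ V) (h : s.image φ = t.image φ) : s = t := by
  ext x
  constructor
  · intro hx
    have : φ x ∈ t.image φ := h ▸ Finset.mem_image_of_mem φ hx
    obtain ⟨y, hy, hyx⟩ := Finset.mem_image.1 this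
    rwa [← hinj (ht hy) (hs hx) hyx]
  · intro hx
    have : φ x ∈ s.image φ := h ▸ Finset.mem_image_of_mem φ hx
    obtain ⟨y, hy, hyx⟩ := Finset.mem_image.1 this
    rwa [← hinj (hs hy) (ht hx) hyx]

lemma uOrd_map {A B V : Finset ℕ} {φ : ℕ → ℕ} (hinj : Set.InjOn φ V) (hAB : A ∪ B = V)
    {l : List ℕ} (hl : l ∈ Orderings V) :
    uOrd (A.image φ) (B.image φ) (l.map φ) = uOrd A B l := by
  have hA : A ⊆ V := hAB ▸ Finset.subset_union_left
  obtain ⟨hnd, htf⟩ := mem_orderings.1 hl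
  have hcardA : (A.image φ).card = A.card :=
    Finset.card_image_of_injOn (hinj.mono (by exact_mod_cast hA))
  have hcardB : (B.image φ).card = B.card :=
    Finset.card_image_of_injOn (hinj.mono (by
      exact_mod_cast (hAB ▸ Finset.subset_union_right : B ⊆ V)))
  have hmapmem : l.map φ ∈ Orderings (A.image φ ∪ B.image φ) := by
    rw [← Finset.image_union, hAB]
    refine mem_orderings.2 ⟨hnd.map_on ?_, by rw [list_toFinset_map, htf]⟩
    intro x hx y hy hxy
    exact hinj (htf ▸ List.mem_toFinset.2 hx) (htf ▸ List.mem_toFinset.2 hy) hxy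
  have hcond : ((l.map φ).take (A.image φ).card).toFinset = A.image φ ↔
      (l.take A.card).toFinset = A := by
    rw [hcardA, ← List.map_take, list_toFinset_map]
    constructor
    · intro h
      refine image_cancel hinj ?_ hA h
      intro x hx
      rw [← htf]
      exact List.mem_toFinset.2 (List.mem_of_mem_take (List.mem_toFinset.1 hx))
    · intro h; rw [h]
  have hl' : l ∈ Orderings (A ∪ B) := by rw [hAB]; exact hl
  have hval : ((A.image φ).card.factorial * (B.image φ).card.factorial : ℕ)
      = A.card.factorial * B.card.factorial := by rw [hcardA, hcardB]
  unfold uOrd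
  rw [hval]
  refine if_congr ⟨?_, ?_⟩ rfl rfl
  · rintro ⟨_, h2⟩
    exact ⟨hl', hcond.1 h2⟩
  · rintro ⟨_, h2⟩
    exact ⟨hmapmem, hcond.2 h2⟩

lemma muCRO_nonneg (G : FinHypergraph 2) (l : List ℕ) : 0 ≤ muCRO G l := by
  unfold muCRO
  have := uOrd_nonneg (bip G).1 (bip G).2 l
  have := uOrd_nonneg (bip G).2 (bip G).1 l
  linarith

lemma muCRO_supported {G : FinHypergraph 2} (hG : G.Bipartite) {l : List ℕ}
    (hl : l ∉ Orderings G.verts) : muCRO G l = 0 := by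
  obtain ⟨h1, _, _⟩ := bip_spec hG
  unfold muCRO
  rw [uOrd_zero (by rwa [h1]), uOrd_zero (by rwa [Finset.union_comm, h1])]
  norm_num

lemma muCRO_total {G : FinHypergraph 2} (hG : G.Bipartite) :
    ∑ l ∈ Orderings G.verts, muCRO G l = 1 := by
  obtain ⟨h1, h2, _⟩ := bip_spec hG
  unfold muCRO
  rw [← h1, ← Finset.sum_div, Finset.sum_add_distrib, sum_uOrd_total _ _ h2]
  rw [show (bip G).1 ∪ (bip G).2 = (bip G).2 ∪ (bip G).1 from Finset.union_comm _ _,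
    sum_uOrd_total _ _ h2.symm]
  norm_num

lemma muCRO_iso {G G' : FinHypergraph 2} (hG : G.Connected ∧ G.Bipartite)
    (hG' : G'.Connected ∧ G'.Bipartite) {φ : ℕ → ℕ} (hiso : G.IsIso G' φ)
    {l : List ℕ} (hl : l ∈ Orderings G.verts) : muCRO G' (l.map φ) = muCRO G l := by
  obtain ⟨hinj, himg, hedge⟩ := hiso
  obtain ⟨h1, h2, h3⟩ := bip_spec hG.2
  set A := (bip G).1
  set B := (bip G).2
  have hbp' : IsBipPair G' (A.image φ) (B.image φ) := by
    refine ⟨by rw [← Finset.image_union, h1, himg], ?_, ?_⟩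
    · rw [Finset.disjoint_left]
      intro x hxA hxB
      obtain ⟨a, ha, rfl⟩ := Finset.mem_image.1 hxA
      obtain ⟨b, hb, hba⟩ := Finset.mem_image.1 hxB
      have haV : a ∈ G.verts := h1 ▸ Finset.mem_union_left _ ha
      have hbV : b ∈ G.verts := h1 ▸ Finset.mem_union_right _ hb
      rw [hinj hbV haV hba] at hb
      exact Finset.disjoint_left.1 h2 ha hb
    · intro e' he'
      set e := G.verts.filter (fun x => φ x ∈ e') with hedef
      have heV : e ⊆ G.verts := Finset.filter_subset _ _
      have himg2 : e.image φ = e' := by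
        apply Finset.Subset.antisymm
        · intro y hy
          obtain ⟨x, hx, rfl⟩ := Finset.mem_image.1 hy
          exact (Finset.mem_filter.1 hx).2
        · intro y hy
          have : y ∈ G'.verts := G'.edge_subset _ he' hy
          rw [← himg] at this
          obtain ⟨x, hx, rfl⟩ := Finset.mem_image.1 this
          exact Finset.mem_image_of_mem φ (Finset.mem_filter.2 ⟨hx, hy⟩)
      have he : e ∈ G.edges := (hedge e heV).2 (by rwa [himg2])
      obtain ⟨a, ha, b, hb, hab⟩ := h3 e he
      refine ⟨φ a, Finset.mem_image_of_mem φ ha, φ b, Finset.mem_image_of_mem φ hb, ?_⟩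
      rw [← himg2, hab, Finset.image_insert, Finset.image_singleton]
  rw [muCRO_eq hG'.1 hG'.2 hbp' (l.map φ), uOrd_map hinj h1 hl,
    uOrd_map hinj (by rw [Finset.union_comm]; exact h1) hl]
  rfl

lemma muCRO_restrict {G H : FinHypergraph 2} (hG : G.Connected ∧ G.Bipartite)
    (hH : H.Connected ∧ H.Bipartite) (hind : H.IsInduced G)
    {m : List ℕ} (hm : m ∈ Orderings H.verts) :
    muCRO H m = ∑ l ∈ (Orderings G.verts).filter
      (fun l => l.filter (fun x => decide (x ∈ H.verts)) = m), muCRO G l := by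
  obtain ⟨hsub, hiff⟩ := hind
  obtain ⟨h1, h2, h3⟩ := bip_spec hG.2
  set A := (bip G).1
  set B := (bip G).2
  set W := H.verts with hWdef
  have hW : W ⊆ A ∪ B := h1 ▸ hsub
  have hbpH : IsBipPair H (A ∩ W) (B ∩ W) := by
    refine ⟨?_, h2.mono Finset.inter_subset_left Finset.inter_subset_left, ?_⟩
    · rw [← Finset.union_inter_distrib_right, Finset.inter_eq_right.2 hW]
    · intro e he
      have heW : e ⊆ W := H.edge_subset _ he
      have heG : e ∈ G.edges := (hiff e heW).1 he
      obtain ⟨a, ha, b, hb, hab⟩ := h3 e heG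
      have haW : a ∈ W := heW (by rw [hab]; simp)
      have hbW : b ∈ W := heW (by rw [hab]; simp)
      exact ⟨a, Finset.mem_inter.2 ⟨ha, haW⟩, b, Finset.mem_inter.2 ⟨hb, hbW⟩, hab⟩
  rw [muCRO_eq hH.1 hH.2 hbpH m]
  have hsum : ∀ l, muCRO G l = (uOrd A B l + uOrd B A l) / 2 := fun l => rfl
  simp only [hsum]
  rw [← Finset.sum_div, Finset.sum_add_distrib, ← h1,
    sum_uOrd_restrict A B W h2 hW m hm]
  rw [show A ∪ B = B ∪ A from Finset.union_comm _ _,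
    sum_uOrd_restrict B A W h2.symm (by rwa [Finset.union_comm]) m hm]

def G0 : FinHypergraph 2 :=
  ⟨{0, 1, 2}, {{0, 1}, {1, 2}}, by decide, by decide⟩

lemma G0_adj01 : G0.Adj 0 1 := by
  show ({0, 1} : Finset ℕ) ∈ G0.edges; decide
lemma G0_adj10 : G0.Adj 1 0 := by
  show ({1, 0} : Finset ℕ) ∈ G0.edges; decide
lemma G0_adj12 : G0.Adj 1 2 := by
  show ({1, 2} : Finset ℕ) ∈ G0.edges; decide
lemma G0_adj21 : G0.Adj 2 1 := by
  show ({2, 1} : Finset ℕ) ∈ G0.edges; decide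

lemma G0_conn : G0.Connected := by
  intro x hx y hy hxy
  have hx' : x = 0 ∨ x = 1 ∨ x = 2 := by
    simpa [G0] using hx
  have hy' : y = 0 ∨ y = 1 ∨ y = 2 := by
    simpa [G0] using hy
  rcases hx' with rfl | rfl | rfl <;> rcases hy' with rfl | rfl | rfl
  · exact absurd rfl hxy
  · exact ⟨[1], List.Chain.cons G0_adj01 List.Chain.nil, rfl⟩
  · exact ⟨[1, 2], List.Chain.cons G0_adj01 (List.Chain.cons G0_adj12 List.Chain.nil), rfl⟩
  · exact ⟨[0], List.Chain.cons G0_adj10 List.Chain.nil, rfl⟩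
  · exact absurd rfl hxy
  · exact ⟨[2], List.Chain.cons G0_adj12 List.Chain.nil, rfl⟩
  · exact ⟨[1, 0], List.Chain.cons G0_adj21 (List.Chain.cons G0_adj10 List.Chain.nil), rfl⟩
  · exact ⟨[1], List.Chain.cons G0_adj21 List.Chain.nil, rfl⟩
  · exact absurd rfl hxy

lemma G0_bippair : IsBipPair G0 {0, 2} {1} := ⟨by decide, by decide, by decide⟩

lemma G0_bip : G0.Bipartite := ⟨{0, 2}, {1}, G0_bippair.1, G0_bippair.2.1, G0_bippair.2.2⟩

lemma G0_mu : muCRO G0 [0, 1, 2] = 0 := by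
  rw [muCRO_eq G0_conn G0_bip G0_bippair]
  have h1 : uOrd {0, 2} {1} [0, 1, 2] = 0 := by
    rw [uOrd, if_neg]
    rintro ⟨-, h⟩
    exact absurd h (by decide)
  have h2 : uOrd {1} {0, 2} [0, 1, 2] = 0 := by
    rw [uOrd, if_neg]
    rintro ⟨-, h⟩
    exact absurd h (by decide)
  rw [h1, h2]
  norm_num

/-- There is a non-uniform consistent random ordering on the class of all finite
connected bipartite simple graphs. -/
theorem uniqueErgodicity.stmt7 :
    ∃ cro : ConsistentRandomOrdering {G : FinHypergraph 2 | G.Connected ∧ G.Bipartite},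
      ∃ G ∈ {G : FinHypergraph 2 | G.Connected ∧ G.Bipartite},
        ∃ l ∈ Orderings G.verts, cro.μ G l ≠ ((G.verts.card).factorial : ℝ)⁻¹ := by
  refine ⟨⟨muCRO, muCRO_nonneg, ?_, ?_, ?_, ?_⟩, G0, ⟨G0_conn, G0_bip⟩, [0, 1, 2], ?_, ?_⟩
  · exact fun G hG l hl => muCRO_supported hG.2 hl
  · exact fun G hG => muCRO_total hG.2
  · exact fun G hG G' hG' φ hiso l hl => muCRO_iso hG hG' hiso hl
  · exact fun G hG H hH hind m hm => muCRO_restrict hG hH hind hm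
  · exact mem_orderings.2 ⟨by decide, by decide⟩
  · show muCRO G0 [0, 1, 2] ≠ _
    rw [G0_mu, show G0.verts.card = 3 from by decide]
    norm_num [Nat.factorial]
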